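/- For the 2-layer cascade steady-state binomial equations with positive rate constants, the positive steady-state variety admits the monomial parametrization: for any e, f, s¹₁, s¹₂ > 0, setting s⁰₁ = G₁·s¹₁·f/e, y⁰₁ = K₁G₁·s¹₁·f, y¹₁ = L₁·s¹₁·f, s⁰₂ = G₂·s¹₂·f/s¹₁, y⁰₂ = K₂G₂·s¹₂·f, y¹₂ = L₂·s¹₂·f (where G₁ = ν₁/τ₁, G₂ = ν₂/τ₂) yields a solution of all six binomial equations, and conversely every positive solution of the binomials is of this form. -/

import Mathlib

/-- Monomial parametrization of the positive solutions of the binomial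
steady-state system of the 2-layer cascade. -/
theorem cascade2_monomial_parametrization
    (K₁ K₂ L₁ L₂ τ₁ τ₂ ν₁ ν₂ : ℝ)
    (hK₁ : 0 < K₁) (hK₂ : 0 < K₂) (hL₁ : 0 < L₁) (hL₂ : 0 < L₂)
    (hτ₁ : 0 < τ₁) (hτ₂ : 0 < τ₂) (hν₁ : 0 < ν₁) (hν₂ : 0 < ν₂) :
    let G₁ := ν₁ / τ₁
    let G₂ := ν₂ / τ₂
    -- the parametrization solves the binomial system
    (∀ e f s11 s12 : ℝ, 0 < e → 0 < f → 0 < s11 → 0 < s12 →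
      let s01 := G₁ * s11 * f / e
      let y01 := K₁ * G₁ * s11 * f
      let y11 := L₁ * s11 * f
      let s02 := G₂ * s12 * f / s11
      let y02 := K₂ * G₂ * s12 * f
      let y12 := L₂ * s12 * f
      y01 - K₁ * e * s01 = 0 ∧ y11 - L₁ * f * s11 = 0 ∧
      y02 - K₂ * s11 * s02 = 0 ∧ y12 - L₂ * f * s12 = 0 ∧
      τ₁ * s01 * e - ν₁ * s11 * f = 0 ∧ τ₂ * s02 * s11 - ν₂ * s12 * f = 0) ∧
    -- every positive solution of the binomials is of this form
    (∀ s01 s11 s02 s12 y01 y11 y02 y12 e f : ℝ,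
      0 < s01 → 0 < s11 → 0 < s02 → 0 < s12 →
      0 < y01 → 0 < y11 → 0 < y02 → 0 < y12 → 0 < e → 0 < f →
      y01 - K₁ * e * s01 = 0 → y11 - L₁ * f * s11 = 0 →
      y02 - K₂ * s11 * s02 = 0 → y12 - L₂ * f * s12 = 0 →
      τ₁ * s01 * e - ν₁ * s11 * f = 0 → τ₂ * s02 * s11 - ν₂ * s12 * f = 0 →
      s01 = G₁ * s11 * f / e ∧ y01 = K₁ * G₁ * s11 * f ∧ y11 = L₁ * s11 * f ∧
      s02 = G₂ * s12 * f / s11 ∧ y02 = K₂ * G₂ * s12 * f ∧ y12 = L₂ * s12 * f) := by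

  intro G₁ G₂
  constructor
  · intro e f s11 s12 he hf hs11 hs12
    refine ⟨by field_simp [G₁]; ring, by ring, by field_simp [G₂]; ring, by ring,
      by simp only [G₁]; field_simp; ring, by simp only [G₂]; field_simp; ring⟩
  · intro s01 s11 s02 s12 y01 y11 y02 y12 e f h01 h11 h02 h12 hy01 hy11 hy02 hy12 he hf
      e1 e2 e3 e4 e5 e6
    have hs01 : s01 = G₁ * s11 * f / e := by
      have := sub_eq_zero.mp e5
      simp only [G₁]; field_simp
      nlinarith [this]
    have hs02 : s02 = G₂ * s12 * f / s11 := by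
      have := sub_eq_zero.mp e6
      simp only [G₂]; field_simp
      nlinarith [this]
    refine ⟨hs01, ?_, ?_, hs02, ?_, ?_⟩
    · have := sub_eq_zero.mp e1
      rw [this, hs01]; field_simp [G₁]
    · have := sub_eq_zero.mp e2; rw [this]; ring
    · have := sub_eq_zero.mp e3
      rw [this, hs02]; field_simp [G₂]
    · have := sub_eq_zero.mp e4; rw [this]; ring
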